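/- arXiv:2604.08423 — 3 statements merged into one kernel-verified Lean document; each statement's English description precedes it below -/
import Mathlib

section
/- Let g1, g2 : ℝ^d → ℝ be differentiable functions whose gradients are L-Lipschitz on the closed ball B(θ0, r) centered at θ0 with radius r > 0, and suppose |g1(θ) - g2(θ)| ≤ ε for all θ in B(θ0, r). Then ‖∇g1(θ0) - ∇g2(θ0)‖ ≤ 2ε/r + L·r. -/
open Metric RealInnerProductSpace

private lemma abs_integral_aux (L r : ℝ) (hL : 0 ≤ L) (hr : 0 < r) :
    ∫ t in (-r)..r, 2 * L * |t| = 2 * L * r ^ 2 := by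
  have hi1 : IntervalIntegrable (fun t : ℝ => 2 * L * |t|) MeasureTheory.volume (-r) 0 :=
    (Continuous.intervalIntegrable (by continuity) _ _)
  have hi2 : IntervalIntegrable (fun t : ℝ => 2 * L * |t|) MeasureTheory.volume 0 r :=
    (Continuous.intervalIntegrable (by continuity) _ _)
  rw [← intervalIntegral.integral_add_adjacent_intervals hi1 hi2]
  have h1 : (∫ t in (-r)..(0:ℝ), 2 * L * |t|) = ∫ t in (-r)..(0:ℝ), 2 * L * (-t) := by
    apply intervalIntegral.integral_congr
    intro t ht
    rw [Set.uIcc_of_le (by linarith)] at ht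
    have : |t| = -t := abs_of_nonpos ht.2
    simp [this]
  have h2 : (∫ t in (0:ℝ)..r, 2 * L * |t|) = ∫ t in (0:ℝ)..r, 2 * L * t := by
    apply intervalIntegral.integral_congr
    intro t ht
    rw [Set.uIcc_of_le (by linarith)] at ht
    have : |t| = t := abs_of_nonneg ht.1
    simp [this]
  rw [h1, h2]
  have e1 : (∫ t in (-r)..(0:ℝ), 2 * L * (-t)) = 2 * L * (-((0 ^ 2 - (-r) ^ 2) / 2)) := by
    rw [intervalIntegral.integral_const_mul, intervalIntegral.integral_neg, integral_id]
  have e2 : (∫ t in (0:ℝ)..r, 2 * L * t) = 2 * L * ((r ^ 2 - 0 ^ 2) / 2) := by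
    rw [intervalIntegral.integral_const_mul, integral_id]
  rw [e1, e2]; ring

/-- Lemma 4: if two functions with `L`-Lipschitz gradients on the closed ball
`B(θ₀, r)` differ by at most `ε` on that ball, then their gradients at the
center differ by at most `2ε/r + L·r`. -/
theorem gradient_close_of_close_on_ball
    {d : ℕ} (g₁ g₂ : EuclideanSpace ℝ (Fin d) → ℝ)
    (θ₀ : EuclideanSpace ℝ (Fin d)) (r ε L : ℝ)
    (hr : 0 < r) (hε : 0 ≤ ε) (hL : 0 ≤ L)
    (hg₁ : Differentiable ℝ g₁) (hg₂ : Differentiable ℝ g₂)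
    (hlip₁ : ∀ θ ∈ closedBall θ₀ r, ∀ θ' ∈ closedBall θ₀ r,
      ‖gradient g₁ θ - gradient g₁ θ'‖ ≤ L * ‖θ - θ'‖)
    (hlip₂ : ∀ θ ∈ closedBall θ₀ r, ∀ θ' ∈ closedBall θ₀ r,
      ‖gradient g₂ θ - gradient g₂ θ'‖ ≤ L * ‖θ - θ'‖)
    (hclose : ∀ θ ∈ closedBall θ₀ r, |g₁ θ - g₂ θ| ≤ ε) :
    ‖gradient g₁ θ₀ - gradient g₂ θ₀‖ ≤ 2 * ε / r + L * r := by
  set v := gradient g₁ θ₀ - gradient g₂ θ₀ with hv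
  by_cases hv0 : v = 0
  · rw [hv0, norm_zero]
    positivity
  have hvn : 0 < ‖v‖ := norm_pos_iff.mpr hv0
  set u : EuclideanSpace ℝ (Fin d) := ‖v‖⁻¹ • v with hu
  have hun : ‖u‖ = 1 := by
    rw [hu, norm_smul, norm_inv, norm_norm]
    field_simp
  set γ : ℝ → EuclideanSpace ℝ (Fin d) := fun t => θ₀ + t • u with hγ
  have hγ0 : γ 0 = θ₀ := by simp [hγ]
  have hγdist : ∀ t : ℝ, ‖γ t - θ₀‖ = |t| := by
    intro t
    simp [hγ, norm_smul, hun, abs_of_nonneg]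
  have hγmem : ∀ t : ℝ, |t| ≤ r → γ t ∈ closedBall θ₀ r := by
    intro t ht
    rw [mem_closedBall, dist_eq_norm, hγdist t]
    exact ht
  -- derivative of the path
  have hγd : ∀ t : ℝ, HasDerivAt γ u t := by
    intro t
    have h1 : HasDerivAt (fun s : ℝ => s • u) ((1 : ℝ) • u) t :=
      (hasDerivAt_id t).smul_const u
    simpa [hγ] using h1.const_add θ₀
  set ψ : ℝ → ℝ := fun t => ((inner ℝ (gradient g₁ (γ t))) u : ℝ) - ((inner ℝ (gradient g₂ (γ t))) u : ℝ) with hψ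
  -- the composed function has derivative ψ
  have hφ : ∀ t : ℝ, HasDerivAt (fun s => g₁ (γ s) - g₂ (γ s)) (ψ t) t := by
    intro t
    have h1 : HasFDerivAt g₁ ((InnerProductSpace.toDual ℝ _) (gradient g₁ (γ t))) (γ t) :=
      ((hg₁ (γ t)).hasGradientAt).hasFDerivAt
    have h2 : HasFDerivAt g₂ ((InnerProductSpace.toDual ℝ _) (gradient g₂ (γ t))) (γ t) :=
      ((hg₂ (γ t)).hasGradientAt).hasFDerivAt
    have d1 := h1.comp_hasDerivAt t (hγd t)
    have d2 := h2.comp_hasDerivAt t (hγd t)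
    have hd := d1.sub d2
    simp only [InnerProductSpace.toDual_apply_apply] at hd
    exact hd
  -- continuity of ψ on [-r, r]
  have hγcont : Continuous γ := by
    apply Continuous.add continuous_const
    exact (continuous_id.smul continuous_const)
  have hgc : ∀ (g : EuclideanSpace ℝ (Fin d) → ℝ),
      (∀ θ ∈ closedBall θ₀ r, ∀ θ' ∈ closedBall θ₀ r,
        ‖gradient g θ - gradient g θ'‖ ≤ L * ‖θ - θ'‖) →
      ContinuousOn (gradient g) (closedBall θ₀ r) := by
    intro g hlip
    have : LipschitzOnWith (Real.toNNReal L) (gradient g) (closedBall θ₀ r) := by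
      apply LipschitzOnWith.of_dist_le_mul
      intro x hx y hy
      rw [dist_eq_norm, dist_eq_norm]
      calc ‖gradient g x - gradient g y‖ ≤ L * ‖x - y‖ := hlip x hx y hy
        _ ≤ (Real.toNNReal L) * ‖x - y‖ := by
            gcongr
            exact Real.le_coe_toNNReal L
    exact this.continuousOn
  have hmaps : Set.MapsTo γ (Set.uIcc (-r) r) (closedBall θ₀ r) := by
    intro t ht
    rw [Set.uIcc_of_le (by linarith)] at ht
    exact hγmem t (abs_le.mpr ⟨ht.1, ht.2⟩)
  have hcψ : ContinuousOn ψ (Set.uIcc (-r) r) := by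
    apply ContinuousOn.sub
    · exact ContinuousOn.inner ((hgc g₁ hlip₁).comp hγcont.continuousOn hmaps)
        continuousOn_const
    · exact ContinuousOn.inner ((hgc g₂ hlip₂).comp hγcont.continuousOn hmaps)
        continuousOn_const
  have hψint : IntervalIntegrable ψ MeasureTheory.volume (-r) r :=
    hcψ.intervalIntegrable
  -- FTC
  have key : (∫ t in (-r)..r, ψ t) = (g₁ (γ r) - g₂ (γ r)) - (g₁ (γ (-r)) - g₂ (γ (-r))) :=
    intervalIntegral.integral_eq_sub_of_hasDerivAt (fun t _ => hφ t) hψint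
  -- ψ 0 = ‖v‖
  have hψ0 : ψ 0 = ‖v‖ := by
    rw [hψ]
    simp only [hγ0]
    rw [← inner_sub_left]
    rw [show gradient g₁ θ₀ - gradient g₂ θ₀ = v from rfl, hu, real_inner_smul_right,
      real_inner_self_eq_norm_mul_norm]
    field_simp
  -- pointwise bound on |ψ t - ‖v‖|
  have hbound : ∀ t ∈ Set.uIcc (-r) r, |ψ t - ‖v‖| ≤ 2 * L * |t| := by
    intro t ht
    have htr : |t| ≤ r := by
      rw [Set.uIcc_of_le (by linarith)] at ht
      exact abs_le.mpr ⟨ht.1, ht.2⟩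
    have hmem : γ t ∈ closedBall θ₀ r := hγmem t htr
    have hmem0 : θ₀ ∈ closedBall θ₀ r := mem_closedBall_self (le_of_lt hr)
    have heq : ψ t - ‖v‖ =
        ((inner ℝ ((gradient g₁ (γ t) - gradient g₁ θ₀) - (gradient g₂ (γ t) - gradient g₂ θ₀))) u : ℝ) := by
      rw [← hψ0, hψ]
      simp only [hγ0]
      rw [inner_sub_left, inner_sub_left, inner_sub_left]
      ring
    rw [heq]
    calc |((inner ℝ ((gradient g₁ (γ t) - gradient g₁ θ₀) - (gradient g₂ (γ t) - gradient g₂ θ₀))) u : ℝ)|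
        ≤ ‖(gradient g₁ (γ t) - gradient g₁ θ₀) - (gradient g₂ (γ t) - gradient g₂ θ₀)‖ * ‖u‖ :=
          abs_real_inner_le_norm _ _
      _ = ‖(gradient g₁ (γ t) - gradient g₁ θ₀) - (gradient g₂ (γ t) - gradient g₂ θ₀)‖ := by
          rw [hun, mul_one]
      _ ≤ ‖gradient g₁ (γ t) - gradient g₁ θ₀‖ + ‖gradient g₂ (γ t) - gradient g₂ θ₀‖ :=
          norm_sub_le _ _
      _ ≤ L * ‖γ t - θ₀‖ + L * ‖γ t - θ₀‖ := by
          gcongr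
          · exact hlip₁ (γ t) hmem θ₀ hmem0
          · exact hlip₂ (γ t) hmem θ₀ hmem0
      _ = 2 * L * |t| := by rw [hγdist t]; ring
  -- integrate the bound
  have hconst_int : (∫ _t in (-r)..r, ‖v‖) = 2 * r * ‖v‖ := by
    rw [intervalIntegral.integral_const, smul_eq_mul]
    ring
  have hdiff : |2 * r * ‖v‖ - (∫ t in (-r)..r, ψ t)| ≤ 2 * L * r ^ 2 := by
    have hsub : (∫ t in (-r)..r, (‖v‖ - ψ t)) = 2 * r * ‖v‖ - (∫ t in (-r)..r, ψ t) := by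
      rw [intervalIntegral.integral_sub intervalIntegrable_const hψint, hconst_int]
    have hb : ‖∫ t in (-r)..r, (‖v‖ - ψ t)‖ ≤ |∫ t in (-r)..r, (2 * L * |t| : ℝ)| := by
      refine le_trans ?_ (le_abs_self _)
      apply intervalIntegral.norm_integral_le_of_norm_le (by linarith)
      · filter_upwards with t ht
        have ht' : t ∈ Set.uIcc (-r) r := by
          rw [Set.uIcc_of_le (by linarith)]; exact Set.Ioc_subset_Icc_self ht
        rw [Real.norm_eq_abs, abs_sub_comm]
        exact hbound t ht'
      · exact Continuous.intervalIntegrable (continuous_const.mul continuous_abs) _ _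
    rw [hsub] at hb
    rw [abs_integral_aux L r hL hr] at hb
    calc |2 * r * ‖v‖ - (∫ t in (-r)..r, ψ t)| ≤ |2 * L * r ^ 2| := by
          rw [← Real.norm_eq_abs] at hb ⊢; exact hb
      _ = 2 * L * r ^ 2 := abs_of_nonneg (by positivity)
  -- bound on endpoints
  have hend : |(g₁ (γ r) - g₂ (γ r)) - (g₁ (γ (-r)) - g₂ (γ (-r)))| ≤ 2 * ε := by
    have h1 : |g₁ (γ r) - g₂ (γ r)| ≤ ε :=
      hclose (γ r) (hγmem r (by rw [abs_of_nonneg (le_of_lt hr)]))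
    have h2 : |g₁ (γ (-r)) - g₂ (γ (-r))| ≤ ε :=
      hclose (γ (-r)) (hγmem (-r) (by rw [abs_neg, abs_of_nonneg (le_of_lt hr)]))
    calc |(g₁ (γ r) - g₂ (γ r)) - (g₁ (γ (-r)) - g₂ (γ (-r)))|
        ≤ |g₁ (γ r) - g₂ (γ r)| + |g₁ (γ (-r)) - g₂ (γ (-r))| := abs_sub _ _
      _ ≤ 2 * ε := by linarith
  -- combine
  have hmain : 2 * r * ‖v‖ ≤ 2 * ε + 2 * L * r ^ 2 := by
    have := abs_sub_abs_le_abs_sub (2 * r * ‖v‖) (∫ t in (-r)..r, ψ t)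
    have h2 : |∫ t in (-r)..r, ψ t| ≤ 2 * ε := by rw [key]; exact hend
    have h3 : |2 * r * ‖v‖| = 2 * r * ‖v‖ := abs_of_nonneg (by positivity)
    linarith [le_abs_self (2 * r * ‖v‖ - (∫ t in (-r)..r, ψ t)),
      neg_abs_le (2 * r * ‖v‖ - (∫ t in (-r)..r, ψ t)), le_abs_self (∫ t in (-r)..r, ψ t),
      neg_abs_le (∫ t in (-r)..r, ψ t)]
  -- conclude
  rw [div_add' _ _ _ (ne_of_gt hr), le_div_iff₀ hr]
  nlinarith [hmain, mul_pos hr hvn]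
end

section
/- Let f : ℝ → ℝ be twice differentiable with |f''(t)| ≤ 2L for all t ∈ [0, r], and |f(t)| ≤ ε for all t ∈ [0, r], where r > 0. Then |f'(0)| ≤ 2ε/r + L·r. -/
open Set

/-- One-dimensional slice bound: if `f` is twice differentiable with
`|f''| ≤ 2L` and `|f| ≤ ε` on `[0, r]`, then `|f'(0)| ≤ 2ε/r + L·r`. -/
theorem deriv_at_zero_bound (f : ℝ → ℝ) (r ε L : ℝ)
    (hr : 0 < r) (hε : 0 ≤ ε) (hL : 0 ≤ L)
    (hf : Differentiable ℝ f) (hf' : Differentiable ℝ (deriv f))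
    (hf'' : ∀ t ∈ Icc (0 : ℝ) r, |deriv (deriv f) t| ≤ 2 * L)
    (hfb : ∀ t ∈ Icc (0 : ℝ) r, |f t| ≤ ε) :
    |deriv f 0| ≤ 2 * ε / r + L * r := by
  set s := Icc (0:ℝ) r with hs
  have hus : UniqueDiffOn ℝ s := uniqueDiffOn_Icc hr
  have h0s : (0:ℝ) ∈ s := ⟨le_refl 0, hr.le⟩
  have hrs : r ∈ s := ⟨hr.le, le_refl r⟩
  have hone : ∀ x ∈ s, iteratedDerivWithin 1 f s x = deriv f x := by
    intro x hx
    rw [iteratedDerivWithin_one]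
    exact (hf x).derivWithin (hus x hx)
  have htwo : ∀ x ∈ s, iteratedDerivWithin 2 f s x = deriv (deriv f) x := by
    intro x hx
    rw [iteratedDerivWithin_succ]
    rw [derivWithin_congr hone (hone x hx)]
    exact (hf' x).derivWithin (hus x hx)
  have hcd : ContDiffOn ℝ 1 f s :=
    (contDiff_one_iff_deriv.mpr ⟨hf, hf'.continuous⟩).contDiffOn
  have hdiff : DifferentiableOn ℝ (iteratedDerivWithin 1 f s) (Ioo (0:ℝ) r) := by
    apply (hf'.differentiableOn (s := Ioo 0 r)).congr
    intro x hx
    exact hone x (Ioo_subset_Icc_self hx)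
  obtain ⟨ν, hν, heq⟩ := taylor_mean_remainder_lagrange (n := 1) hr.ne
    (by rw [uIcc_of_le hr.le]; exact hcd)
    (by rw [uIcc_of_le hr.le, uIoo_of_le hr.le]; exact hdiff)
  rw [uIoo_of_le hr.le] at hν
  rw [uIcc_of_le hr.le, ← hs] at heq
  have hνs : ν ∈ s := Ioo_subset_Icc_self hν
  have htay : taylorWithinEval f 1 s 0 r = f 0 + r * deriv f 0 := by
    rw [taylor_within_apply]
    simp [Finset.sum_range_succ, hone 0 h0s, mul_comm]
  rw [htay, htwo ν hνs] at heq
  norm_num [Nat.factorial] at heq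
  have key : r * deriv f 0 = f r - f 0 - deriv (deriv f) ν * r ^ 2 / 2 := by linarith
  have h1 := abs_le.mp (hfb 0 h0s)
  have h2 := abs_le.mp (hfb r hrs)
  have h3 := abs_le.mp (hf'' ν hνs)
  have hb : |r * deriv f 0| ≤ 2 * ε + L * r ^ 2 := by
    rw [key, abs_le]
    constructor <;> nlinarith [sq_nonneg r]
  rw [abs_mul, abs_of_pos hr] at hb
  have h5 : |deriv f 0| ≤ (2 * ε + L * r ^ 2) / r := by
    rw [le_div_iff₀ hr]; linarith [hb]
  have h6 : (2 * ε + L * r ^ 2) / r = 2 * ε / r + L * r := by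
    field_simp
  linarith
end

section
/- Let A and B be symmetric positive definite d×d real matrices whose smallest eigenvalues are each at least λ_min > 0. Then the Frobenius norm of the difference of their (positive definite) square roots satisfies ‖A^{1/2} - B^{1/2}‖_F ≤ (1/(2√λ_min)) ‖A - B‖_F. -/
open Matrix

/-- Frobenius norm of a real matrix. -/
noncomputable def frobNorm {d : ℕ} (M : Matrix (Fin d) (Fin d) ℝ) : ℝ :=
  Real.sqrt (∑ i, ∑ j, (M i j) ^ 2)

/-- The positive semidefinite square root of a positive semidefinite matrix
(the definition Mathlib had as `Matrix.PosSemidef.sqrt`, since removed). -/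
noncomputable def Matrix.PosSemidef.sqrt {n 𝕜 : Type*} [Fintype n] [DecidableEq n] [RCLike 𝕜]
    [PartialOrder 𝕜]
    {A : Matrix n n 𝕜} (hA : A.PosSemidef) : Matrix n n 𝕜 :=
  hA.1.eigenvectorUnitary.1 * diagonal ((↑) ∘ (√·) ∘ hA.1.eigenvalues) *
  (star hA.1.eigenvectorUnitary : Matrix n n 𝕜)

lemma psd_sqrt_mul_self_real {d : ℕ} (A : Matrix (Fin d) (Fin d) ℝ) (hA : A.PosSemidef) :
    hA.sqrt * hA.sqrt = A := by
  unfold Matrix.PosSemidef.sqrt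
  set U := hA.1.eigenvectorUnitary with hU
  set D : Matrix (Fin d) (Fin d) ℝ := diagonal ((RCLike.ofReal : ℝ → ℝ) ∘ (√·) ∘ hA.1.eigenvalues) with hD
  have hUU : (star U : Matrix (Fin d) (Fin d) ℝ) * U = 1 := Unitary.coe_star_mul_self U
  have h1 : U.1 * D * (star U : Matrix (Fin d) (Fin d) ℝ) * (U.1 * D * (star U : Matrix (Fin d) (Fin d) ℝ))
      = U.1 * (D * ((star U : Matrix (Fin d) (Fin d) ℝ) * U) * D) * (star U : Matrix (Fin d) (Fin d) ℝ) := by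
    simp only [mul_assoc]
  rw [h1, hUU, mul_one, hD, diagonal_mul_diagonal]
  conv_rhs => rw [hA.1.spectral_theorem, Unitary.conjStarAlgAut_apply]
  congr 3
  funext i
  simp [Real.mul_self_sqrt (hA.eigenvalues_nonneg i)]


open Finset in
lemma sqrt_quad_lb {d : ℕ} (A : Matrix (Fin d) (Fin d) ℝ) (hA : A.PosDef)
    (lammin : ℝ) (hlam : 0 < lammin)
    (hAlam : ∀ x : Fin d → ℝ, lammin * (x ⬝ᵥ x) ≤ x ⬝ᵥ A.mulVec x)
    (x : Fin d → ℝ) :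
    Real.sqrt lammin * (x ⬝ᵥ x) ≤ x ⬝ᵥ (hA.posSemidef.sqrt).mulVec x := by
  set hH := hA.posSemidef.1 with hHdef
  -- eigenvalue lower bound
  have heig : ∀ i, lammin ≤ hH.eigenvalues i := by
    intro i
    set v : Fin d → ℝ := ⇑(hH.eigenvectorBasis i) with hv
    have hmv : A *ᵥ v = hH.eigenvalues i • v := hH.mulVec_eigenvectorBasis i
    have hvv : v ⬝ᵥ v = 1 := by
      have h1 : ‖hH.eigenvectorBasis i‖ = 1 := hH.eigenvectorBasis.orthonormal.1 i
      rw [EuclideanSpace.norm_eq] at h1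
      have h2 := Real.sqrt_eq_one.mp h1
      simpa [dotProduct, Real.norm_eq_abs, sq_abs, ← sq] using h2
    have := hAlam v
    rw [hmv, dotProduct_smul, hvv] at this
    simpa using this
  -- spectral computation
  set U := (hH.eigenvectorUnitary : Matrix (Fin d) (Fin d) ℝ) with hU
  set y : Fin d → ℝ := x ᵥ* U with hy
  have hkey : star U *ᵥ x = y := by
    ext i
    simp [Matrix.mulVec, Matrix.vecMul, hy, dotProduct, conjTranspose, mul_comm]
  have hyy : y ⬝ᵥ y = x ⬝ᵥ x := by
    have hUU : U * star U = 1 := mem_unitaryGroup_iff.mp hH.eigenvectorUnitary.2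
    calc y ⬝ᵥ y = (x ᵥ* U) ⬝ᵥ (star U *ᵥ x) := by rw [hkey]
      _ = x ⬝ᵥ (U *ᵥ (star U *ᵥ x)) := (dotProduct_mulVec x U _).symm
      _ = x ⬝ᵥ ((U * star U) *ᵥ x) := by rw [mulVec_mulVec]
      _ = x ⬝ᵥ x := by rw [hUU, one_mulVec]
  have hform : x ⬝ᵥ (hA.posSemidef.sqrt).mulVec x
      = ∑ i, Real.sqrt (hH.eigenvalues i) * y i ^ 2 := by
    have hs : hA.posSemidef.sqrt
        = U * Matrix.diagonal ((↑) ∘ Real.sqrt ∘ hH.eigenvalues) * star U := rfl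
    rw [hs]
    rw [← mulVec_mulVec, ← mulVec_mulVec, hkey, dotProduct_mulVec]
    simp [dotProduct, mulVec_diagonal, ← hy]
    ring_nf
    exact Finset.sum_congr rfl fun i _ => by ring
  rw [hform, ← hyy]
  have : Real.sqrt lammin * (y ⬝ᵥ y) = ∑ i, Real.sqrt lammin * y i ^ 2 := by
    simp [dotProduct, Finset.mul_sum, ← sq]
  rw [this]
  apply Finset.sum_le_sum
  intro i _
  exact mul_le_mul_of_nonneg_right (Real.sqrt_le_sqrt (heig i)) (sq_nonneg _)

set_option maxHeartbeats 1000000 in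
/-- Lipschitz property of the matrix square root: for symmetric positive
definite `A, B` with eigenvalues at least `λmin > 0`,
`‖A^{1/2} - B^{1/2}‖_F ≤ ‖A - B‖_F / (2√λmin)`. -/
theorem sqrt_lipschitz_of_eigenvalue_lower_bound {d : ℕ}
    (A B : Matrix (Fin d) (Fin d) ℝ) (lammin : ℝ) (hlam : 0 < lammin)
    (hA : A.PosDef) (hB : B.PosDef)
    (hAlam : ∀ x : Fin d → ℝ, lammin * (x ⬝ᵥ x) ≤ x ⬝ᵥ A.mulVec x)
    (hBlam : ∀ x : Fin d → ℝ, lammin * (x ⬝ᵥ x) ≤ x ⬝ᵥ B.mulVec x) :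
    frobNorm (hA.posSemidef.sqrt - hB.posSemidef.sqrt)
      ≤ (1 / (2 * Real.sqrt lammin)) * frobNorm (A - B) := by
  set S := hA.posSemidef.sqrt with hSdef
  set T := hB.posSemidef.sqrt with hTdef
  set E := S - T with hEdef
  have hS := sqrt_quad_lb A hA lammin hlam hAlam
  have hT := sqrt_quad_lb B hB lammin hlam hBlam
  have hdecomp : A - B = S * E + E * T := by
    have hA2 : S * S = A := psd_sqrt_mul_self_real A hA.posSemidef
    have hB2 : T * T = B := psd_sqrt_mul_self_real B hB.posSemidef
    rw [← hA2, ← hB2, hEdef]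
    noncomm_ring
  set e2 := ∑ i, ∑ j, (E i j) ^ 2 with he2
  set f2 := ∑ i, ∑ j, ((A - B) i j) ^ 2 with hf2
  have he2nonneg : 0 ≤ e2 := by positivity
  have hf2nonneg : 0 ≤ f2 := by positivity
  -- lower bound on the inner product
  have claim1 : 2 * Real.sqrt lammin * e2 ≤ ∑ i, ∑ j, E i j * (A - B) i j := by
    have hsplit : ∑ i, ∑ j, E i j * (A - B) i j
        = (∑ j, ∑ i, E i j * (S * E) i j) + (∑ i, ∑ j, E i j * (E * T) i j) := by
      rw [hdecomp, Finset.sum_comm (f := fun j i => E i j * (S * E) i j)]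
      rw [← Finset.sum_add_distrib]
      refine Finset.sum_congr rfl fun i _ => ?_
      rw [← Finset.sum_add_distrib]
      refine Finset.sum_congr rfl fun j _ => ?_
      simp [Matrix.add_apply, mul_add]
    rw [hsplit]
    have h1 : Real.sqrt lammin * e2 ≤ ∑ j, ∑ i, E i j * (S * E) i j := by
      have : e2 = ∑ j, (fun i => E i j) ⬝ᵥ (fun i => E i j) := by
        rw [he2, Finset.sum_comm]
        exact Finset.sum_congr rfl fun j _ => Finset.sum_congr rfl fun i _ => sq (E i j)
      rw [this, Finset.mul_sum]
      refine Finset.sum_le_sum fun j _ => ?_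
      have := hS (fun i => E i j)
      refine this.trans_eq ?_
      simp only [dotProduct, Matrix.mulVec, Matrix.mul_apply]
      rfl
    have h2 : Real.sqrt lammin * e2 ≤ ∑ i, ∑ j, E i j * (E * T) i j := by
      have he2' : e2 = ∑ i, (fun j => E i j) ⬝ᵥ (fun j => E i j) := by
        exact Finset.sum_congr rfl fun i _ => Finset.sum_congr rfl fun j _ => sq (E i j)
      rw [he2', Finset.mul_sum]
      refine Finset.sum_le_sum fun i _ => ?_
      refine (hT (fun j => E i j)).trans_eq ?_
      simp only [dotProduct, Matrix.mulVec, Matrix.mul_apply]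
      simp_rw [Finset.mul_sum]
      rw [Finset.sum_comm]
      exact Finset.sum_congr rfl fun j _ => Finset.sum_congr rfl fun k _ => by ring
    linarith
  -- Cauchy-Schwarz
  have claim2 : ∑ i, ∑ j, E i j * (A - B) i j ≤ Real.sqrt e2 * Real.sqrt f2 := by
    have := Real.sum_mul_le_sqrt_mul_sqrt (Finset.univ : Finset (Fin d × Fin d))
      (fun p => E p.1 p.2) (fun p => (A - B) p.1 p.2)
    simpa [Fintype.sum_prod_type, he2, hf2] using this
  have key : 2 * Real.sqrt lammin * e2 ≤ Real.sqrt e2 * Real.sqrt f2 :=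
    claim1.trans claim2
  have hslam : 0 < Real.sqrt lammin := Real.sqrt_pos.mpr hlam
  unfold frobNorm
  rw [← he2, ← hf2]
  rcases eq_or_lt_of_le (Real.sqrt_nonneg e2) with h0 | h0
  · rw [← h0]; positivity
  · have key2 : 2 * Real.sqrt lammin * Real.sqrt e2 ≤ Real.sqrt f2 := by
      refine le_of_mul_le_mul_right ?_ h0
      calc 2 * Real.sqrt lammin * Real.sqrt e2 * Real.sqrt e2
          = 2 * Real.sqrt lammin * (Real.sqrt e2 * Real.sqrt e2) := by ring
        _ = 2 * Real.sqrt lammin * e2 := by rw [Real.mul_self_sqrt he2nonneg]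
        _ ≤ Real.sqrt e2 * Real.sqrt f2 := key
        _ = Real.sqrt f2 * Real.sqrt e2 := by ring
    rw [div_mul_eq_mul_div, one_mul, le_div_iff₀ (by positivity)]
    calc Real.sqrt e2 * (2 * Real.sqrt lammin)
        = 2 * Real.sqrt lammin * Real.sqrt e2 := by ring
      _ ≤ Real.sqrt f2 := key2
end
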